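/- For a prime p and a real number α > 0, the integral of |1 − x|_p^(α−1) over the unit sphere {x ∈ ℚ_p : |x|_p = 1} equals (p − 2 + p^(−α)) / (p(1 − p^(−α))). -/

import Mathlib

open MeasureTheory Real Filter
open scoped ENNReal

noncomputable instance padicMeasurableSpace (p : ℕ) [Fact p.Prime] : MeasurableSpace ℚ_[p] := borel _
instance padicBorelSpace (p : ℕ) [Fact p.Prime] : BorelSpace ℚ_[p] := ⟨rfl⟩

/-- The Haar measure on `ℚ_[p]` normalized so that the unit ball has measure 1. -/
noncomputable def padicHaar (p : ℕ) [Fact p.Prime] : Measure ℚ_[p] :=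
  Measure.addHaarMeasure
    ⟨⟨Metric.closedBall 0 1, isCompact_closedBall 0 1⟩,
      ⟨0, Metric.ball_subset_interior_closedBall (Metric.mem_ball_self one_pos)⟩⟩

section Aux
variable (p : ℕ) [Fact p.Prime]

instance : (padicHaar p).IsAddLeftInvariant := by
  unfold padicHaar; infer_instance

/-- `pB p n` is the closed ball of radius `p^(-n)`. -/
def pB (n : ℕ) : Set ℚ_[p] := Metric.closedBall 0 ((p : ℝ) ^ (-(n : ℤ)))

lemma mem_pB {n : ℕ} {x : ℚ_[p]} : x ∈ pB p n ↔ ‖x‖ ≤ (p : ℝ) ^ (-(n : ℤ)) := by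
  simp [pB, Metric.mem_closedBall, dist_eq_norm]

lemma measurableSet_pB (n : ℕ) : MeasurableSet (pB p n) :=
  measurableSet_closedBall

lemma padicHaar_pB_zero : padicHaar p (pB p 0) = 1 := by
  have : pB p 0 = Metric.closedBall (0 : ℚ_[p]) 1 := by
    simp [pB]
  rw [this]
  exact Measure.addHaarMeasure_self (K₀ :=
    ⟨⟨Metric.closedBall 0 1, isCompact_closedBall 0 1⟩,
      ⟨0, Metric.ball_subset_interior_closedBall (Metric.mem_ball_self one_pos)⟩⟩)

lemma pB_cover (n : ℕ) :
    pB p n = ⋃ i ∈ Finset.range p,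
      (fun x => -((i : ℚ_[p]) * (p : ℚ_[p]) ^ n) + x) ⁻¹' pB p (n + 1) := by
  have hp := (Fact.out : p.Prime)
  have hp0 : (0:ℝ) < p := by exact_mod_cast hp.pos
  ext x
  simp only [Set.mem_iUnion, Set.mem_preimage, mem_pB, Finset.mem_range]
  constructor
  · intro hx
    have hpn : ‖((p : ℚ_[p]) ^ n)‖ = (p:ℝ) ^ (-(n:ℤ)) := by
      simp [norm_pow, Padic.norm_p, ← zpow_natCast, ← zpow_neg]
    have hz : ‖x / (p : ℚ_[p]) ^ n‖ ≤ 1 := by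
      rw [norm_div, hpn, div_le_one (by positivity)]
      simpa using hx
    set Z : ℤ_[p] := ⟨x / (p : ℚ_[p]) ^ n, hz⟩ with hZ
    refine ⟨Z.appr 1, by simpa using Z.appr_lt 1, ?_⟩
    have hspec : ‖Z - (Z.appr 1 : ℤ_[p])‖ ≤ (p : ℝ) ^ (-(1:ℕ) : ℤ) :=
      (PadicInt.norm_le_pow_iff_mem_span_pow _ 1).2 (Z.appr_spec 1)
    have hcoe : ‖(x / (p : ℚ_[p]) ^ n) - (Z.appr 1 : ℚ_[p])‖ ≤ (p : ℝ)⁻¹ := by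
      have := hspec
      rw [PadicInt.norm_def] at this
      push_cast at this
      simpa using this
    have hxne : (p : ℚ_[p]) ^ n ≠ 0 := by
      apply pow_ne_zero
      exact_mod_cast hp.ne_zero
    have key : -((Z.appr 1 : ℚ_[p]) * (p : ℚ_[p]) ^ n) + x
        = ((x / (p : ℚ_[p]) ^ n) - (Z.appr 1 : ℚ_[p])) * (p : ℚ_[p]) ^ n := by
      field_simp
      ring
    rw [key, norm_mul, hpn]
    calc ‖x / (p:ℚ_[p]) ^ n - (Z.appr 1 : ℚ_[p])‖ * (p:ℝ) ^ (-(n:ℤ))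
        ≤ (p:ℝ)⁻¹ * (p:ℝ) ^ (-(n:ℤ)) := by
          apply mul_le_mul_of_nonneg_right hcoe (by positivity)
      _ = (p:ℝ) ^ (-((n:ℤ)+1)) := by
          rw [← zpow_neg_one, ← zpow_add₀ (ne_of_gt hp0)]; ring_nf
      _ = (p:ℝ) ^ (-(((n:ℕ)+1:ℕ) : ℤ)) := by push_cast; ring_nf
  · rintro ⟨i, hi, hx⟩
    have h1 : ‖(i : ℚ_[p]) * (p : ℚ_[p]) ^ n‖ ≤ (p:ℝ) ^ (-(n:ℤ)) := by
      rw [norm_mul]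
      have : ‖((i:ℤ) : ℚ_[p])‖ ≤ 1 := Padic.norm_int_le_one _
      calc ‖(i : ℚ_[p])‖ * ‖(p : ℚ_[p]) ^ n‖ ≤ 1 * ‖(p : ℚ_[p]) ^ n‖ := by
            apply mul_le_mul_of_nonneg_right _ (norm_nonneg _)
            simpa using this
        _ = (p:ℝ) ^ (-(n:ℤ)) := by
            simp [norm_pow, Padic.norm_p, ← zpow_natCast, ← zpow_neg]
    have hp1 : (1:ℝ) ≤ p := by exact_mod_cast hp.one_le
    have hmono : (p:ℝ) ^ (-(((n:ℕ)+1:ℕ)) : ℤ) ≤ (p:ℝ) ^ (-(n:ℤ)) := by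
      apply zpow_le_zpow_right₀ hp1
      push_cast; omega
    have : x = ((-((i : ℚ_[p]) * (p : ℚ_[p]) ^ n)) + x) + (i : ℚ_[p]) * (p : ℚ_[p]) ^ n := by ring
    rw [this]
    calc ‖_ + _‖ ≤ max ‖(-((i : ℚ_[p]) * (p : ℚ_[p]) ^ n)) + x‖ ‖(i : ℚ_[p]) * (p : ℚ_[p]) ^ n‖ :=
          Padic.nonarchimedean _ _
      _ ≤ (p:ℝ) ^ (-(n:ℤ)) := max_le (le_trans hx hmono) h1

lemma norm_natCast_sub_one {i j : ℕ} (hi : i < p) (hj : j < p) (hij : i ≠ j) :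
    ‖((i:ℚ_[p]) - j)‖ = 1 := by
  have h1 : ((i:ℚ_[p]) - j) = (((i:ℤ) - j : ℤ) : ℚ_[p]) := by push_cast; ring
  rw [h1]
  have hle : ‖(((i:ℤ) - j : ℤ) : ℚ_[p])‖ ≤ 1 := Padic.norm_int_le_one _
  have hdvd : ¬ ((p:ℤ) ∣ ((i:ℤ) - j)) := by
    intro h
    have habs : |(i:ℤ) - j| < p := by rw [abs_lt]; omega
    exact absurd (Int.eq_zero_of_abs_lt_dvd h habs) (by omega)
  have hlt := (Padic.norm_intCast_lt_one_iff (k := (i:ℤ) - j)).not.2 hdvd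
  push_neg at hlt
  linarith

lemma pB_cover_disjoint (n : ℕ) :
    Set.PairwiseDisjoint ↑(Finset.range p)
      (fun i : ℕ => (fun x => -((i : ℚ_[p]) * (p:ℚ_[p]) ^ n) + x) ⁻¹' pB p (n+1)) := by
  have hp := (Fact.out : p.Prime)
  have hp0 : (0:ℝ) < p := by exact_mod_cast hp.pos
  have hp1 : (1:ℝ) < p := by exact_mod_cast hp.one_lt
  intro i hi j hj hij
  simp only [Finset.coe_range, Set.mem_Iio] at hi hj
  rw [Function.onFun, Set.disjoint_left]
  rintro x hx hx'
  simp only [Set.mem_preimage, mem_pB] at hx hx'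
  have hpn : ‖((p : ℚ_[p]) ^ n)‖ = (p:ℝ) ^ (-(n:ℤ)) := by
    simp [norm_pow, Padic.norm_p, ← zpow_natCast, ← zpow_neg]
  have hkey : (-((j : ℚ_[p]) * (p:ℚ_[p]) ^ n) + x) - (-((i : ℚ_[p]) * (p:ℚ_[p]) ^ n) + x)
      = ((i:ℚ_[p]) - j) * (p:ℚ_[p]) ^ n := by ring
  have h1 : ‖((i:ℚ_[p]) - j) * (p:ℚ_[p]) ^ n‖ = (p:ℝ) ^ (-(n:ℤ)) := by
    rw [norm_mul, norm_natCast_sub_one p hi hj hij, one_mul, hpn]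
  have h2 : ‖((i:ℚ_[p]) - j) * (p:ℚ_[p]) ^ n‖ ≤ (p:ℝ) ^ (-(((n:ℕ)+1:ℕ)) : ℤ) := by
    rw [← hkey]
    calc ‖_ - _‖ = ‖(-((j : ℚ_[p]) * (p:ℚ_[p]) ^ n) + x) + (-((-((i : ℚ_[p]) * (p:ℚ_[p]) ^ n) + x)))‖ := by
          ring_nf
      _ ≤ max ‖-((j : ℚ_[p]) * (p:ℚ_[p]) ^ n) + x‖ ‖-((-((i : ℚ_[p]) * (p:ℚ_[p]) ^ n) + x))‖ :=
          Padic.nonarchimedean _ _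
      _ ≤ (p:ℝ) ^ (-(((n:ℕ)+1:ℕ)) : ℤ) := by
          rw [norm_neg]
          exact max_le hx' hx
  rw [h1] at h2
  have : (-(n:ℤ)) ≤ (-(((n:ℕ)+1:ℕ)) : ℤ) := by
    exact_mod_cast (zpow_le_zpow_iff_right₀ hp1).1 h2
  push_cast at this
  omega

lemma padicHaar_pB (n : ℕ) : padicHaar p (pB p n) = ((p:ℝ≥0∞))⁻¹ ^ n := by
  have hp := (Fact.out : p.Prime)
  have hp0 : (p:ℝ≥0∞) ≠ 0 := by exact_mod_cast hp.ne_zero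
  have hptop : (p:ℝ≥0∞) ≠ ⊤ := ENNReal.natCast_ne_top p
  induction n with
  | zero => simpa using padicHaar_pB_zero p
  | succ n ih =>
    have hmeas : ∀ i : ℕ, MeasurableSet
        ((fun x => -((i : ℚ_[p]) * (p:ℚ_[p]) ^ n) + x) ⁻¹' pB p (n+1)) := fun i =>
      (measurableSet_pB p (n+1)).preimage
        (measurable_const_add _)
    have hsum : padicHaar p (pB p n)
        = ∑ i ∈ Finset.range p, padicHaar p
          ((fun x => -((i : ℚ_[p]) * (p:ℚ_[p]) ^ n) + x) ⁻¹' pB p (n+1)) := by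
      rw [pB_cover p n]
      exact measure_biUnion_finset (pB_cover_disjoint p n) (fun i _ => hmeas i)
    simp only [measure_preimage_add, Finset.sum_const, Finset.card_range, nsmul_eq_mul] at hsum
    rw [ih] at hsum
    calc padicHaar p (pB p (n+1))
        = (p:ℝ≥0∞)⁻¹ * ((p:ℝ≥0∞) * padicHaar p (pB p (n+1))) := by
          rw [← mul_assoc, ENNReal.inv_mul_cancel hp0 hptop, one_mul]
      _ = (p:ℝ≥0∞)⁻¹ * (p:ℝ≥0∞)⁻¹ ^ n := by rw [← hsum]
      _ = (p:ℝ≥0∞)⁻¹ ^ (n+1) := by rw [pow_succ]; ring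

/-- the sphere of radius `p^(-n)` -/
def pS (n : ℕ) : Set ℚ_[p] := {x : ℚ_[p] | ‖x‖ = (p : ℝ) ^ (-(n : ℤ))}

lemma pS_eq (n : ℕ) : pS p n = pB p n \ pB p (n + 1) := by
  have hp := (Fact.out : p.Prime)
  have hiff : ∀ x : ℚ_[p], ‖x‖ ≤ (p:ℝ) ^ (-(((n:ℕ)+1:ℕ)) : ℤ) ↔ ‖x‖ < (p:ℝ) ^ (-(n:ℤ)) := by
    intro x
    have := Padic.norm_le_pow_iff_norm_lt_pow_add_one x (-(((n:ℕ)+1:ℕ)) : ℤ)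
    have harg : (-(((n:ℕ)+1:ℕ)) : ℤ) + 1 = -(n:ℤ) := by push_cast; ring
    rwa [harg] at this
  ext x
  simp only [pS, Set.mem_setOf_eq, Set.mem_diff, mem_pB, hiff]
  constructor
  · intro h; exact ⟨le_of_eq h, by rw [h]; exact lt_irrefl _⟩
  · rintro ⟨h1, h2⟩; exact le_antisymm h1 (not_lt.1 h2)

lemma measurableSet_pS (n : ℕ) : MeasurableSet (pS p n) :=
  continuous_norm.measurable (measurableSet_singleton _)

lemma padicHaar_pS (n : ℕ) :
    padicHaar p (pS p n) = (p:ℝ≥0∞)⁻¹ ^ n - (p:ℝ≥0∞)⁻¹ ^ (n+1) := by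
  have hp := (Fact.out : p.Prime)
  have hp1 : (1:ℝ) ≤ p := by exact_mod_cast hp.one_le
  have hsub : pB p (n+1) ⊆ pB p n := by
    intro x hx
    rw [mem_pB] at hx ⊢
    refine hx.trans (zpow_le_zpow_right₀ hp1 (by push_cast; omega))
  rw [pS_eq, measure_diff hsub (measurableSet_pB p (n+1)).nullMeasurableSet, padicHaar_pB,
    padicHaar_pB]
  rw [padicHaar_pB]
  exact ENNReal.pow_ne_top (ENNReal.inv_ne_top.2 (by exact_mod_cast hp.ne_zero))

lemma padicHaar_singleton (x : ℚ_[p]) : padicHaar p {x} = 0 := by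
  have hp := (Fact.out : p.Prime)
  have hbound : ∀ n : ℕ, padicHaar p {x} ≤ (p:ℝ≥0∞)⁻¹ ^ n := by
    intro n
    have hsub : ({x} : Set ℚ_[p]) ⊆ (fun y => -x + y) ⁻¹' pB p n := by
      intro y hy
      simp only [Set.mem_singleton_iff] at hy
      subst hy
      simp only [Set.mem_preimage, mem_pB, neg_add_cancel, norm_zero]
      positivity
    calc padicHaar p {x} ≤ padicHaar p ((fun y => -x + y) ⁻¹' pB p n) := measure_mono hsub
      _ = padicHaar p (pB p n) := measure_preimage_add _ _ _
      _ = (p:ℝ≥0∞)⁻¹ ^ n := padicHaar_pB p n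
  have hlim : Tendsto (fun n : ℕ => (p:ℝ≥0∞)⁻¹ ^ n) atTop (nhds 0) := by
    apply ENNReal.tendsto_pow_atTop_nhds_zero_of_lt_one
    rw [ENNReal.inv_lt_one]
    exact_mod_cast hp.one_lt
  exact le_antisymm (ge_of_tendsto' hlim hbound) zero_le

/-- the partition pieces of the unit sphere minus `{1}` -/
def pT (n : ℕ) : Set ℚ_[p] := {x : ℚ_[p] | ‖x‖ = 1 ∧ ‖1 - x‖ = (p : ℝ) ^ (-(n : ℤ))}

lemma measurableSet_pT (n : ℕ) : MeasurableSet (pT p n) := by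
  have h1 : MeasurableSet {x : ℚ_[p] | ‖x‖ = 1} :=
    continuous_norm.measurable (measurableSet_singleton _)
  have h2 : MeasurableSet {x : ℚ_[p] | ‖1 - x‖ = (p : ℝ) ^ (-(n : ℤ))} :=
    ((continuous_const.sub continuous_id).norm).measurable (measurableSet_singleton _)
  exact h1.inter h2

lemma norm_eq_one_of_norm_sub_lt {x : ℚ_[p]} (h : ‖1 - x‖ < 1) : ‖x‖ = 1 := by
  have hne : ‖(1:ℚ_[p])‖ ≠ ‖-(1 - x)‖ := by
    rw [norm_neg, norm_one]; exact (ne_of_lt h).symm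
  have : x = 1 + -(1 - x) := by ring
  rw [this, Padic.add_eq_max_of_ne hne, norm_neg, norm_one]
  rw [norm_neg, norm_one] at *
  exact max_eq_left h.le

lemma pT_succ (n : ℕ) :
    pT p (n+1) = (fun x => -1 + x) ⁻¹' pS p (n+1) := by
  have hp := (Fact.out : p.Prime)
  have hp1 : (1:ℝ) < p := by exact_mod_cast hp.one_lt
  ext x
  have hnorm : ‖-1 + x‖ = ‖1 - x‖ := by
    rw [show (-1 + x : ℚ_[p]) = -(1 - x) by ring, norm_neg]
  simp only [pT, pS, Set.mem_setOf_eq, Set.mem_preimage, hnorm]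
  constructor
  · rintro ⟨_, h⟩; exact h
  · intro h
    refine ⟨norm_eq_one_of_norm_sub_lt p ?_, h⟩
    rw [h]
    calc (p:ℝ) ^ (-(((n:ℕ)+1:ℕ)) : ℤ) < (p:ℝ) ^ (0:ℤ) := by
          apply zpow_lt_zpow_right₀ hp1; push_cast; omega
      _ = 1 := zpow_zero _

lemma padicHaar_pT_succ (n : ℕ) :
    padicHaar p (pT p (n+1)) = (p:ℝ≥0∞)⁻¹ ^ (n+1) - (p:ℝ≥0∞)⁻¹ ^ (n+2) := by
  rw [pT_succ, measure_preimage_add, padicHaar_pS]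

lemma pT_zero_eq : pT p 0 = pS p 0 \ ((fun x => -1 + x) ⁻¹' pB p 1) := by
  ext x
  have hnorm : ‖-1 + x‖ = ‖1 - x‖ := by
    rw [show (-1 + x : ℚ_[p]) = -(1 - x) by ring, norm_neg]
  have hiff : ‖1 - x‖ ≤ (p:ℝ) ^ (-((1:ℕ)):ℤ) ↔ ‖1 - x‖ < 1 := by
    have h := Padic.norm_le_pow_iff_norm_lt_pow_add_one (1 - x) (-((1:ℕ)):ℤ)
    have h2 : (-((1:ℕ):ℤ)) + 1 = 0 := by norm_num
    rw [h2, zpow_zero] at h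
    exact h
  simp only [pT, pS, Set.mem_setOf_eq, Set.mem_diff, Set.mem_preimage, mem_pB, hnorm,
    Nat.cast_zero, neg_zero, zpow_zero]
  constructor
  · rintro ⟨h1, h2⟩
    refine ⟨h1, ?_⟩
    rw [hiff, h2]
    exact lt_irrefl 1
  · rintro ⟨h1, h2⟩
    rw [hiff] at h2
    push_neg at h2
    refine ⟨h1, le_antisymm ?_ h2⟩
    calc ‖1 - x‖ = ‖(1:ℚ_[p]) + -x‖ := by rw [sub_eq_add_neg]
      _ ≤ max ‖(1:ℚ_[p])‖ ‖-x‖ := Padic.nonarchimedean _ _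
      _ = 1 := by rw [norm_neg, norm_one, h1, max_self]

lemma padicHaar_pT_zero :
    padicHaar p (pT p 0) = (1 - (p:ℝ≥0∞)⁻¹) - (p:ℝ≥0∞)⁻¹ := by
  have hp := (Fact.out : p.Prime)
  have hsub : ((fun x : ℚ_[p] => -1 + x) ⁻¹' pB p 1) ⊆ pS p 0 := by
    intro x hx
    simp only [Set.mem_preimage, mem_pB] at hx
    have hnorm : ‖-1 + x‖ = ‖1 - x‖ := by
      rw [show (-1 + x : ℚ_[p]) = -(1 - x) by ring, norm_neg]
    rw [hnorm] at hx
    have hlt : ‖1 - x‖ < 1 := by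
      calc ‖1 - x‖ ≤ (p:ℝ) ^ (-(1:ℕ) : ℤ) := hx
        _ < (p:ℝ) ^ (0 : ℤ) := by
            apply zpow_lt_zpow_right₀ (by exact_mod_cast hp.one_lt); norm_num
        _ = 1 := zpow_zero _
    have : ‖x‖ = 1 := norm_eq_one_of_norm_sub_lt p hlt
    simpa [pS] using this
  rw [pT_zero_eq, measure_diff hsub
      ((measurableSet_pB p 1).preimage (continuous_const.add continuous_id).measurable).nullMeasurableSet,
    measure_preimage_add, padicHaar_pB, padicHaar_pS]
  · norm_num
  · rw [measure_preimage_add, padicHaar_pB]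
    exact ENNReal.pow_ne_top (ENNReal.inv_ne_top.2 (by exact_mod_cast hp.ne_zero))

lemma rpow_key (α : ℝ) (n : ℕ) :
    ((p:ℝ)^(-(n:ℤ)))^(α-1) * ((p:ℝ)⁻¹)^n = ((p:ℝ)^(-α))^n := by
  have hp := (Fact.out : p.Prime)
  have hp0 : (0:ℝ) < p := by exact_mod_cast hp.pos
  have h1 : ((p:ℝ)^(-(n:ℤ))) = (p:ℝ) ^ ((-(n:ℤ) : ℤ) : ℝ) := (Real.rpow_intCast _ _).symm
  have h2 : ((p:ℝ)⁻¹)^n = (p:ℝ) ^ ((-(n:ℤ) : ℤ) : ℝ) := by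
    rw [Real.rpow_intCast, zpow_neg, zpow_natCast, inv_pow]
  have h3 : ((p:ℝ)^(-α))^n = (p:ℝ) ^ (-α * n) := by
    rw [← Real.rpow_natCast ((p:ℝ)^(-α)) n, ← Real.rpow_mul hp0.le]
  rw [h1, ← Real.rpow_mul hp0.le, h2, ← Real.rpow_add hp0, h3]
  congr 1
  push_cast
  ring

lemma pT_iUnion : {x : ℚ_[p] | ‖x‖ = 1} \ {1} = ⋃ n, pT p n := by
  have hp := (Fact.out : p.Prime)
  have hp1 : (1:ℝ) < p := by exact_mod_cast hp.one_lt
  ext x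
  simp only [Set.mem_diff, Set.mem_setOf_eq, Set.mem_singleton_iff, Set.mem_iUnion, pT]
  constructor
  · rintro ⟨h1, hne⟩
    have hx0 : (1 - x) ≠ 0 := sub_ne_zero.2 (fun h => hne h.symm)
    have hval := Padic.norm_eq_zpow_neg_valuation hx0
    have hle : ‖1 - x‖ ≤ 1 := by
      calc ‖1 - x‖ = ‖(1:ℚ_[p]) + -x‖ := by rw [sub_eq_add_neg]
        _ ≤ max ‖(1:ℚ_[p])‖ ‖-x‖ := Padic.nonarchimedean _ _
        _ = 1 := by rw [norm_neg, norm_one, h1, max_self]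
    have hvge : 0 ≤ (1 - x).valuation := by
      by_contra hv
      push_neg at hv
      have : (p:ℝ) ^ (0:ℤ) < (p:ℝ) ^ (-(1 - x).valuation) := by
        apply zpow_lt_zpow_right₀ hp1; omega
      rw [zpow_zero] at this
      rw [hval] at hle
      linarith
    refine ⟨((1 - x).valuation).toNat, h1, ?_⟩
    rw [hval]
    congr 1
    omega
  · rintro ⟨n, h1, h2⟩
    refine ⟨h1, fun he => ?_⟩
    rw [he, sub_self, norm_zero] at h2
    have : (0:ℝ) < (p:ℝ) ^ (-(n:ℤ)) := by positivity
    linarith [h2 ▸ this]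

lemma pT_disjoint : Pairwise (Function.onFun Disjoint (pT p)) := by
  have hp := (Fact.out : p.Prime)
  have hp1 : (1:ℝ) < p := by exact_mod_cast hp.one_lt
  intro m n hmn
  rw [Function.onFun, Set.disjoint_left]
  rintro x ⟨_, hm⟩ ⟨_, hn⟩
  apply hmn
  have := hm ▸ hn
  have h := zpow_right_injective₀ (by linarith : (0:ℝ) < p) (by linarith : (p:ℝ) ≠ 1)
    (hn.symm.trans hm)
  omega

end Aux

theorem integral_sub_norm_rpow_unitSphere (p : ℕ) [Fact p.Prime] (α : ℝ) (hα : 0 < α) :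
    ∫ x in {x : ℚ_[p] | ‖x‖ = 1}, ‖1 - x‖ ^ (α - 1) ∂(padicHaar p) =
      ((p : ℝ) - 2 + (p : ℝ) ^ (-α)) / ((p : ℝ) * (1 - (p : ℝ) ^ (-α))) := by
  have hp := (Fact.out : p.Prime)
  have hp0 : (0:ℝ) < p := by exact_mod_cast hp.pos
  have hp1 : (1:ℝ) < p := by exact_mod_cast hp.one_lt
  have hp2 : (2:ℝ) ≤ p := by exact_mod_cast hp.two_le
  set μ := padicHaar p
  set f : ℚ_[p] → ℝ := fun x => ‖1 - x‖ ^ (α - 1) with hf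
  set r : ℝ := (p:ℝ) ^ (-α) with hr
  have hr0 : 0 < r := Real.rpow_pos_of_pos hp0 _
  have hr1 : r < 1 := Real.rpow_lt_one_of_one_lt_of_neg hp1 (by linarith)
  -- measurability of f
  have hnmeas : Measurable fun x : ℚ_[p] => ‖1 - x‖ :=
    (continuous_const.sub continuous_id).norm.measurable
  have hfmeas : Measurable f := by
    have heq : f = fun x => if ‖1 - x‖ = 0 then (if α - 1 = 0 then 1 else 0)
        else Real.exp (Real.log ‖1 - x‖ * (α - 1)) := by
      funext x
      rw [hf]
      simp only
      rw [Real.rpow_def_of_nonneg (norm_nonneg _)]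
    rw [heq]
    exact Measurable.ite (hnmeas (measurableSet_singleton 0)) measurable_const
      (Real.measurable_exp.comp ((Real.measurable_log.comp hnmeas).mul measurable_const))
  -- constants
  set c : ℕ → ℝ := fun n => ((p:ℝ) ^ (-(n:ℤ))) ^ (α - 1) with hc
  have hc0 : ∀ n, 0 ≤ c n := fun n => Real.rpow_nonneg (by positivity) _
  have hfconst : ∀ n, ∀ x ∈ pT p n, f x = c n := by
    intro n x hx
    rw [hf, hc]
    simp only
    rw [hx.2]
  -- integrability
  have hU : IntegrableOn f (⋃ n, pT p n) μ := by
    constructor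
    · exact hfmeas.aestronglyMeasurable
    · rw [hasFiniteIntegral_iff_ofReal (Filter.Eventually.of_forall
        (fun x => Real.rpow_nonneg (norm_nonneg _) _))]
      rw [lintegral_iUnion (measurableSet_pT p) (pT_disjoint p)]
      have hterm : ∀ n, ∫⁻ x in pT p n, ENNReal.ofReal (f x) ∂μ
          = ENNReal.ofReal (c n) * μ (pT p n) := by
        intro n
        rw [setLIntegral_congr_fun (measurableSet_pT p n)
          (g := fun _ => ENNReal.ofReal (c n)) (fun x hx => by rw [hfconst n x hx]),
          setLIntegral_const]
      have hbound : ∀ n, ENNReal.ofReal (c n) * μ (pT p n) ≤ ENNReal.ofReal (r ^ n) := by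
        intro n
        match n with
        | 0 =>
          have h1 : μ (pT p 0) ≤ 1 := by
            have hsub : pT p 0 ⊆ pB p 0 := by
              intro x hx
              rw [mem_pB]
              rw [hx.1]
              norm_num
            calc μ (pT p 0) ≤ μ (pB p 0) := measure_mono hsub
              _ = 1 := by rw [padicHaar_pB]; norm_num
          have hc0eq : c 0 = 1 := by
            show ((p:ℝ) ^ (-((0:ℕ):ℤ))) ^ (α - 1) = 1
            norm_num
          rw [hc0eq]
          simpa using h1
        | (n+1) =>
          have h1 : μ (pT p (n+1)) ≤ (p:ℝ≥0∞)⁻¹ ^ (n+1) := by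
            rw [padicHaar_pT_succ]
            exact tsub_le_self
          have h2 : ((p:ℝ≥0∞))⁻¹ ^ (n+1) = ENNReal.ofReal (((p:ℝ)⁻¹) ^ (n+1)) := by
            rw [ENNReal.ofReal_pow (by positivity), ENNReal.ofReal_inv_of_pos hp0]
            norm_num
          calc ENNReal.ofReal (c (n+1)) * μ (pT p (n+1))
              ≤ ENNReal.ofReal (c (n+1)) * ENNReal.ofReal (((p:ℝ)⁻¹) ^ (n+1)) := by
                rw [← h2]; exact mul_le_mul_right h1 _
            _ = ENNReal.ofReal (c (n+1) * ((p:ℝ)⁻¹) ^ (n+1)) :=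
                (ENNReal.ofReal_mul (hc0 _)).symm
            _ = ENNReal.ofReal (r ^ (n+1)) :=
                congrArg ENNReal.ofReal (rpow_key p α (n+1))
      calc ∑' n, ∫⁻ x in pT p n, ENNReal.ofReal (f x) ∂μ
          ≤ ∑' n, ENNReal.ofReal (r ^ n) := by
            apply ENNReal.tsum_le_tsum
            intro n
            rw [hterm n]
            exact hbound n
        _ = ENNReal.ofReal (∑' n, r ^ n) := by
            rw [ENNReal.ofReal_tsum_of_nonneg (fun n => by positivity)
              (summable_geometric_of_lt_one hr0.le hr1)]
        _ < ⊤ := ENNReal.ofReal_lt_top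
  -- rewrite domain
  have hnull : μ ({x : ℚ_[p] | ‖x‖ = 1} ∩ {1}) = 0 :=
    measure_mono_null Set.inter_subset_right (padicHaar_singleton p 1)
  have hae : ({x : ℚ_[p] | ‖x‖ = 1} \ {1} : Set ℚ_[p]) =ᵐ[μ] {x : ℚ_[p] | ‖x‖ = 1} :=
    MeasureTheory.diff_ae_eq_self.2 hnull
  rw [← setIntegral_congr_set hae, pT_iUnion p,
    integral_iUnion (measurableSet_pT p) (pT_disjoint p) hU]
  -- evaluate each piece
  have hpiece : ∀ n, ∫ x in pT p n, f x ∂μ = (μ (pT p n)).toReal * c n := by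
    intro n
    rw [setIntegral_congr_fun (measurableSet_pT p n) (hfconst n), setIntegral_const,
      smul_eq_mul]
    rfl
  -- toReal of measures
  have hq : ((p:ℝ≥0∞)⁻¹).toReal = (p:ℝ)⁻¹ := by
    rw [ENNReal.toReal_inv]; norm_num
  have hqne : (p:ℝ≥0∞)⁻¹ ≠ ⊤ := ENNReal.inv_ne_top.2 (by exact_mod_cast hp.ne_zero)
  have hqle1 : (p:ℝ≥0∞)⁻¹ ≤ 1 := by
    rw [ENNReal.inv_le_one]
    exact_mod_cast hp.one_le
  have ht0 : (μ (pT p 0)).toReal = 1 - 2 * (p:ℝ)⁻¹ := by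
    rw [padicHaar_pT_zero, tsub_tsub]
    have hle : (p:ℝ≥0∞)⁻¹ + (p:ℝ≥0∞)⁻¹ ≤ 1 := by
      have h2 : (p:ℝ≥0∞)⁻¹ ≤ (2:ℝ≥0∞)⁻¹ :=
        ENNReal.inv_le_inv.2 (by exact_mod_cast hp.two_le)
      calc (p:ℝ≥0∞)⁻¹ + (p:ℝ≥0∞)⁻¹ ≤ (2:ℝ≥0∞)⁻¹ + (2:ℝ≥0∞)⁻¹ := add_le_add h2 h2
        _ = 1 := by
          rw [← two_mul]
          exact ENNReal.mul_inv_cancel (by norm_num) (by norm_num)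
    rw [ENNReal.toReal_sub_of_le hle ENNReal.one_ne_top]
    rw [ENNReal.toReal_add hqne hqne, hq]
    norm_num
    ring
  have htsucc : ∀ n : ℕ, (μ (pT p (n+1))).toReal
      = ((p:ℝ)⁻¹) ^ (n+1) - ((p:ℝ)⁻¹) ^ (n+2) := by
    intro n
    rw [padicHaar_pT_succ]
    have hle : (p:ℝ≥0∞)⁻¹ ^ (n+2) ≤ (p:ℝ≥0∞)⁻¹ ^ (n+1) :=
      pow_le_pow_of_le_one zero_le hqle1 (by omega)
    rw [ENNReal.toReal_sub_of_le hle (ENNReal.pow_ne_top hqne)]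
    rw [ENNReal.toReal_pow, ENNReal.toReal_pow, hq]
  -- summability and evaluation of the series
  set g : ℕ → ℝ := fun n => (μ (pT p n)).toReal * c n with hg
  have hgsucc : ∀ n : ℕ, g (n+1) = ((1 - (p:ℝ)⁻¹) * r) * r ^ n := by
    intro n
    have hck : c (n+1) * ((p:ℝ)⁻¹) ^ (n+1) = r ^ (n+1) := rpow_key p α (n+1)
    show (μ (pT p (n+1))).toReal * c (n+1) = _
    rw [htsucc n]
    calc (((p:ℝ)⁻¹) ^ (n+1) - ((p:ℝ)⁻¹) ^ (n+2)) * c (n+1)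
        = (c (n+1) * ((p:ℝ)⁻¹) ^ (n+1)) * (1 - (p:ℝ)⁻¹) := by ring
      _ = r ^ (n+1) * (1 - (p:ℝ)⁻¹) := by rw [hck]
      _ = ((1 - (p:ℝ)⁻¹) * r) * r ^ n := by ring
  have hshift : (fun n => g (n+1)) = fun n => ((1 - (p:ℝ)⁻¹) * r) * r ^ n := funext hgsucc
  have hsummable : Summable g := by
    rw [← summable_nat_add_iff 1]
    rw [hshift]
    exact (summable_geometric_of_lt_one hr0.le hr1).mul_left _
  have hsum : ∑' n, g n = g 0 + ∑' n, g (n+1) := Summable.tsum_eq_zero_add hsummable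
  have hg0 : g 0 = 1 - 2 * (p:ℝ)⁻¹ := by
    have hc00 : c 0 = 1 := by
      show ((p:ℝ) ^ (-((0:ℕ):ℤ))) ^ (α - 1) = 1
      norm_num
    show (μ (pT p 0)).toReal * c 0 = _
    rw [ht0, hc00, mul_one]
  have hgeo : ∑' n, g (n+1) = ((1 - (p:ℝ)⁻¹) * r) * (1 - r)⁻¹ := by
    rw [hshift, tsum_mul_left, tsum_geometric_of_lt_one hr0.le hr1]
  calc ∑' n, ∫ x in pT p n, f x ∂μ = ∑' n, g n := by
        apply tsum_congr
        intro n
        rw [hpiece n, hg]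
      _ = (1 - 2 * (p:ℝ)⁻¹) + ((1 - (p:ℝ)⁻¹) * r) * (1 - r)⁻¹ := by
        rw [hsum, hg0, hgeo]
      _ = ((p : ℝ) - 2 + r) / ((p : ℝ) * (1 - r)) := by
        have hpne : (p:ℝ) ≠ 0 := ne_of_gt hp0
        have hrne : 1 - r ≠ 0 := by linarith
        field_simp
        ring
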